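/- For the independent-set valuations (OSI) defined from an undirected graph G on vertex set [n] (v_i(S) = 1 if the vertices of S together with i form an independent set in G, else 0): (a) these valuations are monotone; (b) for any full action sequence π, SW(π) equals the length of the maximal prefix of π whose vertex set is an independent set in G; and (c) the maximum social welfare over all action sequences equals the maximum size of an independent set of G. -/

import Mathlib

/-- The agents that precede `i` in the action (sub)sequence `π`. -/
def prefixBefore {n : ℕ} (π : List (Fin n)) (i : Fin n) : List (Fin n) :=
  π.takeWhile (fun j => j != i)

/-- A full action sequence: an ordering of all `n` agents. -/
def IsSeq {n : ℕ} (π : List (Fin n)) : Prop :=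
  π.Nodup ∧ ∀ i : Fin n, i ∈ π

/-- Social welfare of a full action sequence. -/
noncomputable def SW {n : ℕ} (v : Fin n → List (Fin n) → ℝ) (π : List (Fin n)) : ℝ :=
  ∑ i : Fin n, v i (prefixBefore π i)

/-- `s` is an independent set of `G`. -/
def IndepSet {n : ℕ} (G : SimpleGraph (Fin n)) (s : Finset (Fin n)) : Prop :=
  ∀ a ∈ s, ∀ b ∈ s, ¬ G.Adj a b

private lemma indep_anti {n : ℕ} {G : SimpleGraph (Fin n)} {s t : Finset (Fin n)}
    (hst : s ⊆ t) (ht : IndepSet G t) : IndepSet G s :=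
  fun a ha b hb => ht a (hst ha) b (hst hb)

private lemma prefixBefore_eq_take {n : ℕ} {π : List (Fin n)} {i : Fin n} (h : i ∈ π) :
    prefixBefore π i = π.take (π.idxOf i) := by
  unfold prefixBefore
  induction π with
  | nil => simp at h
  | cons a l ih =>
    by_cases hai : a = i
    · subst hai; simp [List.takeWhile]
    · have hi : i ∈ l := by
        rcases List.mem_cons.mp h with h' | h'
        · exact absurd h'.symm hai
        · exact h'
      have hne : (a != i) = true := bne_iff_ne.mpr hai
      simp [List.takeWhile, hne, List.idxOf_cons, beq_false_of_ne hai, ih hi]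

private lemma aux_indexOf_lt_iff {n : ℕ} (π : List (Fin n)) (i : Fin n) (h : i ∈ π)
    (k : ℕ) : π.idxOf i < k ↔ i ∈ π.take k := by
  induction π generalizing k with
  | nil => simp at h
  | cons a l ih =>
    cases k with
    | zero => simp
    | succ k =>
      by_cases hai : a = i
      · subst hai; simp [List.idxOf_cons_self]
      · have hi : i ∈ l := by
          rcases List.mem_cons.mp h with h' | h'
          · exact absurd h'.symm hai
          · exact h'
        have hb : (a == i) = false := beq_false_of_ne hai
        simp [List.idxOf_cons, hb, List.take_succ_cons, ih hi, Ne.symm hai,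
          Nat.succ_lt_succ_iff]

open Classical in
theorem stmt9 {n : ℕ} (G : SimpleGraph (Fin n))
    (v : Fin n → List (Fin n) → ℝ)
    (hv1 : ∀ (i : Fin n) (S : List (Fin n)),
        IndepSet G (insert i S.toFinset) → v i S = 1)
    (hv0 : ∀ (i : Fin n) (S : List (Fin n)),
        ¬ IndepSet G (insert i S.toFinset) → v i S = 0) :
    (∀ (i : Fin n) (S S' : List (Fin n)), S'.Sublist S → v i S ≤ v i S') ∧
    (∀ π, IsSeq π → ∃ k ≤ n, SW v π = k ∧ IndepSet G (π.take k).toFinset ∧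
        ∀ m ≤ n, IndepSet G (π.take m).toFinset → m ≤ k) ∧
    ((∃ π, IsSeq π ∧ SW v π =
        ((Finset.univ.powerset.filter fun s => IndepSet G s).sup Finset.card : ℕ)) ∧
      ∀ π, IsSeq π → SW v π ≤
        ((Finset.univ.powerset.filter fun s => IndepSet G s).sup Finset.card : ℕ)) := by
  -- (a) monotonicity
  have ha : ∀ (i : Fin n) (S S' : List (Fin n)), S'.Sublist S → v i S ≤ v i S' := by
    intro i S S' hsub
    by_cases h : IndepSet G (insert i S.toFinset)
    · have h' : IndepSet G (insert i S'.toFinset) := by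
        refine indep_anti (Finset.insert_subset_insert _ ?_) h
        intro x hx
        rw [List.mem_toFinset] at hx ⊢
        exact hsub.subset hx
      rw [hv1 _ _ h, hv1 _ _ h']
    · rw [hv0 _ _ h]
      by_cases h' : IndepSet G (insert i S'.toFinset)
      · rw [hv1 _ _ h']; norm_num
      · rw [hv0 _ _ h']
  -- (b)
  have hb : ∀ π, IsSeq π → ∃ k ≤ n, SW v π = k ∧ IndepSet G (π.take k).toFinset ∧
      ∀ m ≤ n, IndepSet G (π.take m).toFinset → m ≤ k := by
    rintro π ⟨hnd, hall⟩
    have hlenπ : π.length = n := by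
      have huniv : π.toFinset = Finset.univ :=
        Finset.eq_univ_iff_forall.mpr (fun x => List.mem_toFinset.mpr (hall x))
      have := congrArg Finset.card huniv
      rwa [List.toFinset_card_of_nodup hnd, Finset.card_univ, Fintype.card_fin] at this
    set P : ℕ → Prop := fun m => IndepSet G (π.take m).toFinset with hP
    have hP0 : P 0 := by intro a haa; simp [hP] at haa
    refine ⟨Nat.findGreatest P n, Nat.findGreatest_le n, ?_, ?_, ?_⟩
    rotate_left
    · exact Nat.findGreatest_spec (Nat.zero_le n) hP0
    · exact fun m hm hPm => Nat.le_findGreatest hm hPm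
    set k := Nat.findGreatest P n with hk
    have hPk : P k := Nat.findGreatest_spec (Nat.zero_le n) hP0
    have hmax : ∀ m ≤ n, P m → m ≤ k := fun m hm hPm => Nat.le_findGreatest hm hPm
    have hkn : k ≤ n := Nat.findGreatest_le n
    have hval : ∀ i : Fin n, v i (prefixBefore π i) =
        if π.idxOf i < k then (1 : ℝ) else 0 := by
      intro i
      have hi := hall i
      have hidx : π.idxOf i < π.length := List.idxOf_lt_length_iff.mpr hi
      rw [prefixBefore_eq_take hi]
      have hins : insert i (π.take (π.idxOf i)).toFinset
          = (π.take (π.idxOf i + 1)).toFinset := by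
        rw [← List.take_concat_get' π _ hidx, List.toFinset_append]
        have : π[π.idxOf i] = i := List.getElem_idxOf hidx
        rw [this]
        ext x
        simp [or_comm]
      by_cases hlt : π.idxOf i < k
      · rw [if_pos hlt, hv1]
        rw [hins]
        refine indep_anti ?_ hPk
        intro x hx
        rw [List.mem_toFinset] at hx ⊢
        have : π.take (π.idxOf i + 1) = (π.take k).take (π.idxOf i + 1) := by
          rw [List.take_take, min_eq_left (by omega)]
        rw [this] at hx
        exact List.take_subset _ _ hx
      · rw [if_neg hlt, hv0]
        rw [hins]
        intro hcon
        exact hlt (by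
          have : π.idxOf i + 1 ≤ k := hmax _ (by omega) hcon
          omega)
    have hfilter : (Finset.univ.filter fun i => π.idxOf i < k) = (π.take k).toFinset := by
      ext x
      simp [aux_indexOf_lt_iff π x (hall x) k]
    have hcard : (π.take k).toFinset.card = k := by
      rw [List.toFinset_card_of_nodup (hnd.sublist (List.take_sublist k π)),
        List.length_take, hlenπ, min_eq_left hkn]
    calc SW v π = ∑ i : Fin n, (if π.idxOf i < k then (1 : ℝ) else 0) :=
          Finset.sum_congr rfl (fun i _ => hval i)
      _ = ((Finset.univ.filter fun i => π.idxOf i < k).card : ℝ) := by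
          rw [Finset.sum_boole]
      _ = (k : ℝ) := by rw [hfilter, hcard]
  -- (c)
  set M := (Finset.univ.powerset.filter fun s => IndepSet G s).sup Finset.card with hM
  have hub : ∀ π, IsSeq π → SW v π ≤ (M : ℝ) := by
    intro π hπ
    obtain ⟨k, hkn, hSW, hind, -⟩ := hb π hπ
    rw [hSW]
    have hnd := hπ.1
    have hcard : (π.take k).toFinset.card = k := by
      rw [List.toFinset_card_of_nodup (hnd.sublist (List.take_sublist k π)),
        List.length_take]
      have hlenπ : π.length = n := by
        have huniv : π.toFinset = Finset.univ :=
          Finset.eq_univ_iff_forall.mpr (fun x => List.mem_toFinset.mpr (hπ.2 x))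
        have := congrArg Finset.card huniv
        rwa [List.toFinset_card_of_nodup hnd, Finset.card_univ, Fintype.card_fin] at this
      rw [hlenπ, min_eq_left hkn]
    have hkM : k ≤ M := by
      rw [← hcard]
      exact Finset.le_sup (Finset.mem_filter.mpr
        ⟨Finset.mem_powerset.mpr (Finset.subset_univ _), hind⟩)
    exact_mod_cast hkM
  refine ⟨ha, hb, ⟨?_, hub⟩⟩
  -- existence of an optimal sequence
  have hne : ((Finset.univ.powerset.filter fun s => IndepSet G s) : Finset _).Nonempty := by
    refine ⟨∅, Finset.mem_filter.mpr ⟨Finset.mem_powerset.mpr (Finset.empty_subset _), ?_⟩⟩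
    intro a haa; simp at haa
  obtain ⟨s, hs, hscard⟩ := Finset.exists_mem_eq_sup _ hne Finset.card
  rw [Finset.mem_filter] at hs
  have hsind : IndepSet G s := hs.2
  set π : List (Fin n) := s.toList ++ sᶜ.toList with hπdef
  have hπseq : IsSeq π := by
    constructor
    · refine List.Nodup.append s.nodup_toList sᶜ.nodup_toList ?_
      intro x hx hx'
      rw [Finset.mem_toList] at hx hx'
      exact (Finset.mem_compl.mp hx') hx
    · intro i
      rw [hπdef, List.mem_append, Finset.mem_toList, Finset.mem_toList, Finset.mem_compl]
      tauto
  refine ⟨π, hπseq, ?_⟩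
  obtain ⟨k, hkn, hSW, hind, hmax⟩ := hb π hπseq
  have hMs : M = s.card := hM.trans hscard
  have hMk : M ≤ k := by
    refine hmax M ?_ ?_
    · rw [hMs]
      calc s.card ≤ Finset.univ.card := Finset.card_le_univ s
        _ = n := Finset.card_univ.trans (Fintype.card_fin n)
    · have htake : π.take M = s.toList := by
        rw [hπdef, hMs]
        exact List.take_left' (Finset.length_toList s)
      rw [htake, Finset.toList_toFinset]
      exact hsind
  have hkM : k ≤ M := by
    have := hub π hπseq
    rw [hSW] at this
    exact_mod_cast this
  rw [hSW]
  exact_mod_cast congrArg (Nat.cast : ℕ → ℝ) (le_antisymm hkM hMk)
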